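/- Let S be an inverse semigroup with zero, and for a ∈ S let U_a be the set of proper filters of S containing a. Then: (1) U_0 = ∅; (2) U_a⁻¹ = U_{a⁻¹}; (3) U_a U_b = U_{ab} under the groupoid multiplication of proper filters; (4) each U_a is a partial bisection of the groupoid of proper filters; and (5) U_a ∩ U_b = ⋃_{x ≤ a,b} U_x. -/
import Mathlib


/-- An inverse semigroup with zero: associative multiplication, unique
generalized inverses, and a multiplicatively absorbing zero. -/
structure InvSemigroupZero (S : Type*) [Mul S] [Inv S] [Zero S] : Prop where
  mul_assoc : ∀ a b c : S, a * b * c = a * (b * c)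
  mul_inv_mul : ∀ a : S, a * a⁻¹ * a = a
  inv_mul_inv : ∀ a : S, a⁻¹ * a * a⁻¹ = a⁻¹
  inv_unique : ∀ a t : S, a * t * a = a → t * a * t = t → t = a⁻¹
  zero_mul : ∀ a : S, 0 * a = 0
  mul_zero : ∀ a : S, a * 0 = 0

def IsIdem {S : Type*} [Mul S] (e : S) : Prop := e * e = e

/-- The natural partial order: `s ≤ t` iff `s = t e` for some idempotent `e`. -/
def natLe {S : Type*} [Mul S] (s t : S) : Prop := ∃ e : S, IsIdem e ∧ s = t * e

/-- `s` and `t` are compatible iff `s⁻¹ t` and `s t⁻¹` are idempotents. -/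
def Compat {S : Type*} [Mul S] [Inv S] (s t : S) : Prop :=
  IsIdem (s⁻¹ * t) ∧ IsIdem (s * t⁻¹)

/-- Upward closure of a subset in the natural partial order. -/
def upc {S : Type*} [Mul S] (X : Set S) : Set S := {s | ∃ x ∈ X, natLe x s}

/-- A filter: nonempty, upward closed and downward directed. -/
def IsFilt {S : Type*} [Mul S] (A : Set S) : Prop :=
  A.Nonempty ∧ (∀ a ∈ A, ∀ s, natLe a s → s ∈ A) ∧
    ∀ a ∈ A, ∀ b ∈ A, ∃ c ∈ A, natLe c a ∧ natLe c b

/-- A proper filter: a filter not containing `0`. -/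
def IsPFilt {S : Type*} [Mul S] [Zero S] (A : Set S) : Prop := IsFilt A ∧ (0 : S) ∉ A

def dF {S : Type*} [Mul S] [Inv S] (A : Set S) : Set S :=
  upc {p | ∃ a ∈ A, ∃ b ∈ A, p = a⁻¹ * b}

def rF {S : Type*} [Mul S] [Inv S] (A : Set S) : Set S :=
  upc {p | ∃ a ∈ A, ∃ b ∈ A, p = a * b⁻¹}

def invF {S : Type*} [Inv S] (A : Set S) : Set S := Inv.inv '' A

def mulF {S : Type*} [Mul S] (A B : Set S) : Set S :=
  upc {p | ∃ a ∈ A, ∃ b ∈ B, p = a * b}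

/-- An ultrafilter: a maximal proper filter. -/
def IsUltraF {S : Type*} [Mul S] [Zero S] (A : Set S) : Prop :=
  IsPFilt A ∧ ∀ B : Set S, IsPFilt B → A ⊆ B → A = B

/-- `U_a`: the set of proper filters containing `a`. -/
def UU {S : Type*} [Mul S] [Zero S] (a : S) : Set (Set S) :=
  {A | IsPFilt A ∧ a ∈ A}

/-- Setwise product of two sets of proper filters under the groupoid
multiplication `A · B = (AB)↑`, defined when `d(A) = r(B)`. -/
def prodUU {S : Type*} [Mul S] [Inv S] (𝒜 ℬ : Set (Set S)) : Set (Set S) :=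
  {P | ∃ A ∈ 𝒜, ∃ B ∈ ℬ, dF A = rF B ∧ P = mulF A B}


section Alg
variable {S : Type*} [Mul S] [Inv S] [Zero S] (hS : InvSemigroupZero S)
include hS

lemma inv_invol (a : S) : a⁻¹⁻¹ = a :=
  (hS.inv_unique a⁻¹ a (hS.inv_mul_inv a) (hS.mul_inv_mul a)).symm

lemma idem_inv {e : S} (he : IsIdem e) : e⁻¹ = e :=
  (hS.inv_unique e e (by rw [he, he]) (by rw [he, he])).symm

lemma zero_inv : (0 : S)⁻¹ = 0 :=
  (hS.inv_unique 0 0 (by rw [hS.zero_mul, hS.zero_mul]) (by rw [hS.zero_mul, hS.zero_mul])).symm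

lemma idem_ia (a : S) : IsIdem (a⁻¹ * a) := by
  unfold IsIdem; rw [← hS.mul_assoc, hS.inv_mul_inv]

lemma idem_ai (a : S) : IsIdem (a * a⁻¹) := by
  unfold IsIdem; rw [← hS.mul_assoc, hS.mul_inv_mul]

lemma idem_push {e : S} (he : IsIdem e) (t : S) : e * (e * t) = e * t := by
  rw [← hS.mul_assoc, he]

lemma mim' (a : S) : a * (a⁻¹ * a) = a := by
  rw [← hS.mul_assoc]; exact hS.mul_inv_mul a

lemma imi' (a : S) : a⁻¹ * (a * a⁻¹) = a⁻¹ := by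
  rw [← hS.mul_assoc]; exact hS.inv_mul_inv a

lemma imi_push (a t : S) : a⁻¹ * (a * (a⁻¹ * t)) = a⁻¹ * t := by
  rw [← hS.mul_assoc, ← hS.mul_assoc, hS.inv_mul_inv]

lemma mim_push (a t : S) : a * (a⁻¹ * (a * t)) = a * t := by
  rw [← hS.mul_assoc, ← hS.mul_assoc, hS.mul_inv_mul]

lemma idem_mul {e f : S} (he : IsIdem e) (hf : IsIdem f) : IsIdem (e * f) := by
  have h1 : (e*f) * (f * ((e*f)⁻¹ * e)) * (e*f) = e*f := by
    simp only [hS.mul_assoc]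
    rw [idem_push hS he, idem_push hS hf, ← hS.mul_assoc e f]
    exact mim' hS (e*f)
  have h2 : (f * ((e*f)⁻¹ * e)) * (e*f) * (f * ((e*f)⁻¹ * e)) = f * ((e*f)⁻¹ * e) := by
    simp only [hS.mul_assoc]
    rw [idem_push hS he, idem_push hS hf, ← hS.mul_assoc e f, imi_push hS (e*f) e]
  have hy : f * ((e*f)⁻¹ * e) = (e*f)⁻¹ := hS.inv_unique (e*f) _ h1 h2
  have hxx : IsIdem ((e*f)⁻¹) := by
    unfold IsIdem
    conv_lhs => rw [← hy]
    simp only [hS.mul_assoc]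
    rw [← hS.mul_assoc e f, imi_push hS (e*f) e]
    exact hy
  have heq : e * f = (e*f)⁻¹ := by
    have h := idem_inv hS hxx
    rw [inv_invol hS] at h
    exact h
  rw [← heq] at hxx
  exact hxx

lemma idem_comm {e f : S} (he : IsIdem e) (hf : IsIdem f) : e * f = f * e := by
  have hef := idem_mul hS he hf
  have h1 : (e*f) * (f*e) * (e*f) = e*f := by
    simp only [hS.mul_assoc]
    rw [idem_push hS hf, idem_push hS he, ← hS.mul_assoc e f, hef]
  have h2 : (f*e) * (e*f) * (f*e) = f*e := by
    simp only [hS.mul_assoc]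
    rw [idem_push hS he, idem_push hS hf, ← hS.mul_assoc f e, idem_mul hS hf he]
  have := hS.inv_unique (e*f) (f*e) h1 h2
  rw [idem_inv hS hef] at this; exact this.symm

lemma comm_push {e f : S} (he : IsIdem e) (hf : IsIdem f) (t : S) :
    e * (f * t) = f * (e * t) := by
  rw [← hS.mul_assoc, idem_comm hS he hf, hS.mul_assoc]

lemma conj_swallow {E : S} (hE : IsIdem E) (b : S) : b * (b⁻¹ * (E * b)) = E * b := by
  rw [← hS.mul_assoc, comm_push hS (idem_ai hS b) hE b, hS.mul_inv_mul]

lemma mir (a b : S) : (a * b)⁻¹ = b⁻¹ * a⁻¹ := by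
  refine (hS.inv_unique (a*b) (b⁻¹*a⁻¹) ?_ ?_).symm
  · simp only [hS.mul_assoc]
    rw [← hS.mul_assoc a⁻¹ a b, conj_swallow hS (idem_ia hS a) b,
      ← hS.mul_assoc a, ← hS.mul_assoc, hS.mul_inv_mul]
  · simp only [hS.mul_assoc]
    rw [← hS.mul_assoc a⁻¹ a, ← hS.mul_assoc b,
      comm_push hS (idem_ia hS a) (idem_ai hS b) a⁻¹,
      hS.inv_mul_inv, ← hS.mul_assoc b⁻¹ (b*b⁻¹) a⁻¹, imi' hS b]

lemma conj_idem {g : S} (hg : IsIdem g) (b : S) : IsIdem (b * (g * b⁻¹)) := by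
  unfold IsIdem
  simp only [hS.mul_assoc]
  rw [← hS.mul_assoc b⁻¹ b, comm_push hS hg (idem_ia hS b) (g * b⁻¹),
    idem_push hS hg, ← hS.mul_assoc b, mim' hS b]

end Alg

section Ord
variable {S : Type*} [Mul S] [Inv S] [Zero S] (hS : InvSemigroupZero S)
include hS

lemma conj_idem2 {g : S} (hg : IsIdem g) (b : S) : IsIdem (b⁻¹ * (g * b)) := by
  unfold IsIdem
  simp only [hS.mul_assoc]
  rw [conj_swallow hS hg b, idem_push hS hg]

lemma nle_refl (s : S) : natLe s s := ⟨s⁻¹ * s, idem_ia hS s, (mim' hS s).symm⟩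

lemma nle_trans {s t u : S} (h1 : natLe s t) (h2 : natLe t u) : natLe s u := by
  obtain ⟨e, he, hs⟩ := h1
  obtain ⟨f, hf, ht⟩ := h2
  exact ⟨f * e, idem_mul hS hf he, by rw [hs, ht, hS.mul_assoc]⟩

lemma nle_left_of {s t : S} (h : natLe s t) : ∃ e : S, IsIdem e ∧ s = e * t := by
  obtain ⟨e, he, hs⟩ := h
  refine ⟨t * (e * t⁻¹), conj_idem hS he t, ?_⟩
  rw [hs]
  simp only [hS.mul_assoc]
  rw [show e * (t⁻¹ * t) = (t⁻¹ * t) * e from idem_comm hS he (idem_ia hS t),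
    ← hS.mul_assoc t (t⁻¹*t) e, mim' hS t]

lemma nle_of_left {s t : S} (h : ∃ e : S, IsIdem e ∧ s = e * t) : natLe s t := by
  obtain ⟨e, he, hs⟩ := h
  exact ⟨t⁻¹ * (e * t), conj_idem2 hS he t, by rw [hs, conj_swallow hS he t]⟩

lemma nle_inv {s t : S} (h : natLe s t) : natLe s⁻¹ t⁻¹ := by
  obtain ⟨e, he, hs⟩ := h
  exact nle_of_left hS ⟨e, he, by rw [hs, mir hS, idem_inv hS he]⟩

lemma nle_mul {s t u v : S} (h1 : natLe s t) (h2 : natLe u v) : natLe (s*u) (t*v) := by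
  obtain ⟨e, he, hs⟩ := h1
  obtain ⟨f, hf, hu⟩ := nle_left_of hS h2
  refine ⟨v⁻¹ * ((e*f) * v), conj_idem2 hS (idem_mul hS he hf) v, ?_⟩
  rw [hs, hu, hS.mul_assoc t v, conj_swallow hS (idem_mul hS he hf) v,
    ← hS.mul_assoc t (e*f) v, ← hS.mul_assoc t e f, hS.mul_assoc (t*e) f v]

lemma nle_zero {s : S} (h : natLe s (0:S)) : s = 0 := by
  obtain ⟨e, _, hs⟩ := h
  rw [hs, hS.zero_mul]

lemma le_fix {r t : S} (h : natLe r t) : r * (t⁻¹ * r) = r := by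
  obtain ⟨e, he, hr⟩ := h
  rw [hr]
  simp only [hS.mul_assoc]
  rw [← hS.mul_assoc t⁻¹ t e, comm_push hS he (idem_ia hS t) e, he,
    ← hS.mul_assoc t (t⁻¹*t) e, mim' hS t]

lemma le_ab_r1 {r a b : S} (h : natLe r (a*b)) : a * (a⁻¹ * r) = r := by
  obtain ⟨e, he, hr⟩ := h
  rw [hr, hS.mul_assoc a b e]
  exact mim_push hS a (b*e)

lemma le_ab_r2 {r a b : S} (h : natLe r (a*b)) : r * (b⁻¹ * b) = r := by
  obtain ⟨e, he, hr⟩ := h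
  rw [hr]
  simp only [hS.mul_assoc]
  rw [show e * (b⁻¹ * b) = (b⁻¹*b) * e from idem_comm hS he (idem_ia hS b),
    ← hS.mul_assoc b (b⁻¹*b) e, mim' hS b]

lemma le_ab_split {r a b : S} (h : natLe r (a*b)) : (r*b⁻¹) * (a⁻¹*r) = r := by
  have h2 := le_fix hS h
  rw [mir hS a b] at h2
  calc (r*b⁻¹) * (a⁻¹*r) = r*((b⁻¹*a⁻¹)*r) := by simp only [hS.mul_assoc]
    _ = r := h2

lemma key_identity {r a b : S} (h : natLe r (a*b)) :
    (a⁻¹*r) * (a⁻¹*r)⁻¹ = (r*b⁻¹)⁻¹ * (r*b⁻¹) := by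
  obtain ⟨g, hg, hr⟩ := h
  have hg' : g⁻¹ = g := idem_inv hS hg
  have hF : IsIdem (b*(g*b⁻¹)) := conj_idem hS hg b
  have hE : IsIdem (a⁻¹*a) := idem_ia hS a
  have claim1 : (a⁻¹*r) * (a⁻¹*r)⁻¹ = (a⁻¹*a) * (b*(g*b⁻¹)) := by
    rw [mir hS a⁻¹ r, inv_invol hS a, hr, mir hS (a*b) g, mir hS a b, hg']
    simp only [hS.mul_assoc]
    rw [idem_push hS hg,
      ← show (b*(g*b⁻¹))*(a⁻¹*a) = b*(g*(b⁻¹*(a⁻¹*a))) from by simp only [hS.mul_assoc],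
      idem_comm hS hF hE, hS.mul_assoc a⁻¹ a (b*(g*b⁻¹)), imi_push hS a (a*(b*(g*b⁻¹)))]
  have claim2 : (r*b⁻¹)⁻¹ * (r*b⁻¹) = (a⁻¹*a) * (b*(g*b⁻¹)) := by
    rw [mir hS r b⁻¹, inv_invol hS b, hr, mir hS (a*b) g, mir hS a b, hg']
    simp only [hS.mul_assoc]
    rw [← hS.mul_assoc a⁻¹ a (b*(g*b⁻¹)),
      ← show (b*(g*b⁻¹))*((a⁻¹*a)*(b*(g*b⁻¹))) = b*(g*(b⁻¹*((a⁻¹*a)*(b*(g*b⁻¹)))))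
        from by simp only [hS.mul_assoc],
      comm_push hS hF hE (b*(g*b⁻¹)), hF, hS.mul_assoc]
  rw [claim1, claim2]

end Ord

section Filt
variable {S : Type*} [Mul S] [Inv S] [Zero S] (hS : InvSemigroupZero S)
include hS

lemma directed3 {A : Set S} (hA : IsFilt A) {x y z : S} (hx : x ∈ A) (hy : y ∈ A)
    (hz : z ∈ A) : ∃ c ∈ A, natLe c x ∧ natLe c y ∧ natLe c z := by
  obtain ⟨d, hd, hdx, hdy⟩ := hA.2.2 x hx y hy
  obtain ⟨c, hc, hcd, hcz⟩ := hA.2.2 d hd z hz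
  exact ⟨c, hc, nle_trans hS hcd hdx, nle_trans hS hcd hdy, hcz⟩

lemma directed4 {A : Set S} (hA : IsFilt A) {x y z w : S} (hx : x ∈ A) (hy : y ∈ A)
    (hz : z ∈ A) (hw : w ∈ A) :
    ∃ c ∈ A, natLe c x ∧ natLe c y ∧ natLe c z ∧ natLe c w := by
  obtain ⟨c, hc, hc1, hc2, hc3⟩ := directed3 hS hA hx hy hz
  obtain ⟨d, hd, hdc, hdw⟩ := hA.2.2 c hc w hw
  exact ⟨d, hd, nle_trans hS hdc hc1, nle_trans hS hdc hc2, nle_trans hS hdc hc3, hdw⟩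

lemma dF_pfilt {A : Set S} (hA : IsPFilt A) : IsPFilt (dF A) := by
  obtain ⟨⟨⟨a0, ha0⟩, hup, hdir⟩, h0⟩ := hA
  refine ⟨⟨⟨a0⁻¹ * a0, ⟨_, ⟨a0, ha0, a0, ha0, rfl⟩, nle_refl hS _⟩⟩, ?_, ?_⟩, ?_⟩
  · rintro s ⟨g, hg, hgs⟩ t hst
    exact ⟨g, hg, nle_trans hS hgs hst⟩
  · rintro s ⟨g1, ⟨x1, hx1, y1, hy1, rfl⟩, hg1⟩ t ⟨g2, ⟨x2, hx2, y2, hy2, rfl⟩, hg2⟩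
    obtain ⟨c, hc, h1, h2, h3, h4⟩ := directed4 hS ⟨⟨a0, ha0⟩, hup, hdir⟩ hx1 hy1 hx2 hy2
    refine ⟨c⁻¹ * c, ⟨_, ⟨c, hc, c, hc, rfl⟩, nle_refl hS _⟩, ?_, ?_⟩
    · exact nle_trans hS (nle_mul hS (nle_inv hS h1) h2) hg1
    · exact nle_trans hS (nle_mul hS (nle_inv hS h3) h4) hg2
  · rintro ⟨g, ⟨x, hx, y, hy, rfl⟩, hg0⟩
    have hxy : x⁻¹ * y = 0 := nle_zero hS hg0
    obtain ⟨c, hc, h1, h2⟩ := hdir x hx y hy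
    have : c⁻¹ * c = 0 := by
      have h3 := nle_mul hS (nle_inv hS h1) h2
      rw [hxy] at h3
      exact nle_zero hS h3
    have : c = 0 := by rw [← mim' hS c, this, hS.mul_zero]
    exact h0 (this ▸ hc)

lemma rF_pfilt {A : Set S} (hA : IsPFilt A) : IsPFilt (rF A) := by
  obtain ⟨⟨⟨a0, ha0⟩, hup, hdir⟩, h0⟩ := hA
  refine ⟨⟨⟨a0 * a0⁻¹, ⟨_, ⟨a0, ha0, a0, ha0, rfl⟩, nle_refl hS _⟩⟩, ?_, ?_⟩, ?_⟩
  · rintro s ⟨g, hg, hgs⟩ t hst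
    exact ⟨g, hg, nle_trans hS hgs hst⟩
  · rintro s ⟨g1, ⟨x1, hx1, y1, hy1, rfl⟩, hg1⟩ t ⟨g2, ⟨x2, hx2, y2, hy2, rfl⟩, hg2⟩
    obtain ⟨c, hc, h1, h2, h3, h4⟩ := directed4 hS ⟨⟨a0, ha0⟩, hup, hdir⟩ hx1 hy1 hx2 hy2
    refine ⟨c * c⁻¹, ⟨_, ⟨c, hc, c, hc, rfl⟩, nle_refl hS _⟩, ?_, ?_⟩
    · exact nle_trans hS (nle_mul hS h1 (nle_inv hS h2)) hg1
    · exact nle_trans hS (nle_mul hS h3 (nle_inv hS h4)) hg2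
  · rintro ⟨g, ⟨x, hx, y, hy, rfl⟩, hg0⟩
    have hxy : x * y⁻¹ = 0 := nle_zero hS hg0
    obtain ⟨c, hc, h1, h2⟩ := hdir x hx y hy
    have : c * c⁻¹ = 0 := by
      have h3 := nle_mul hS h1 (nle_inv hS h2)
      rw [hxy] at h3
      exact nle_zero hS h3
    have : c = 0 := by
      rw [← hS.mul_inv_mul c, this, hS.zero_mul]
    exact h0 (this ▸ hc)

lemma mulF_mem {A B : Set S} {x y : S} (hx : x ∈ A) (hy : y ∈ B) : x * y ∈ mulF A B :=
  ⟨x * y, ⟨x, hx, y, hy, rfl⟩, nle_refl hS _⟩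

lemma mulF_pfilt {A B : Set S} (hA : IsPFilt A) (hB : IsPFilt B) (hd : dF A = rF B) :
    IsPFilt (mulF A B) := by
  obtain ⟨a0, ha0⟩ := hA.1.1
  obtain ⟨b0, hb0⟩ := hB.1.1
  refine ⟨⟨⟨a0 * b0, mulF_mem hS ha0 hb0⟩, ?_, ?_⟩, ?_⟩
  · rintro s ⟨g, hg, hgs⟩ t hst
    exact ⟨g, hg, nle_trans hS hgs hst⟩
  · rintro s ⟨g1, ⟨x1, hx1, y1, hy1, rfl⟩, hg1⟩ t ⟨g2, ⟨x2, hx2, y2, hy2, rfl⟩, hg2⟩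
    obtain ⟨c, hc, h1, h2⟩ := hA.1.2.2 x1 hx1 x2 hx2
    obtain ⟨d, hd', h3, h4⟩ := hB.1.2.2 y1 hy1 y2 hy2
    exact ⟨c * d, mulF_mem hS hc hd',
      nle_trans hS (nle_mul hS h1 h3) hg1, nle_trans hS (nle_mul hS h2 h4) hg2⟩
  · rintro ⟨g, ⟨x, hx, y, hy, rfl⟩, hg0⟩
    have hxy : x * y = 0 := nle_zero hS hg0
    have hx' : x⁻¹ * x ∈ rF B := by
      rw [← hd]
      exact ⟨_, ⟨x, hx, x, hx, rfl⟩, nle_refl hS _⟩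
    have hy' : y * y⁻¹ ∈ rF B := ⟨_, ⟨y, hy, y, hy, rfl⟩, nle_refl hS _⟩
    have hrB := rF_pfilt hS hB
    obtain ⟨c, hc, h1, h2⟩ := hrB.1.2.2 _ hx' _ hy'
    have hcidem : IsIdem c := by
      obtain ⟨e, he, hce⟩ := h1
      rw [hce]
      exact idem_mul hS (idem_ia hS x) he
    have hprod : (x⁻¹ * x) * (y * y⁻¹) = 0 := by
      rw [hS.mul_assoc x⁻¹ x (y * y⁻¹), ← hS.mul_assoc x y y⁻¹, hxy, hS.zero_mul,
        hS.mul_zero]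
    have hc0 : c = 0 := by
      have h3 := nle_mul hS h1 h2
      rw [hcidem, hprod] at h3
      exact nle_zero hS h3
    exact hrB.2 (hc0 ▸ hc)

end Filt

section Main1
variable {S : Type*} [Mul S] [Inv S] [Zero S] (hS : InvSemigroupZero S)
include hS

lemma invF_pfilt {A : Set S} (hA : IsPFilt A) : IsPFilt (invF A) := by
  obtain ⟨⟨⟨a0, ha0⟩, hup, hdir⟩, h0⟩ := hA
  refine ⟨⟨⟨a0⁻¹, a0, ha0, rfl⟩, ?_, ?_⟩, ?_⟩
  · rintro s ⟨x, hx, rfl⟩ t hst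
    have := nle_inv hS hst
    rw [inv_invol hS x] at this
    exact ⟨t⁻¹, hup x hx t⁻¹ this, inv_invol hS t⟩
  · rintro s ⟨x, hx, rfl⟩ t ⟨y, hy, rfl⟩
    obtain ⟨c, hc, h1, h2⟩ := hdir x hx y hy
    exact ⟨c⁻¹, ⟨c, hc, rfl⟩, nle_inv hS h1, nle_inv hS h2⟩
  · rintro ⟨x, hx, hx0⟩
    have : x = 0 := by rw [← inv_invol hS x, hx0, zero_inv hS]
    exact h0 (this ▸ hx)

lemma invF_invF (A : Set S) : invF (invF A) = A := by
  unfold invF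
  rw [Set.image_image]
  simp only [inv_invol hS, Set.image_id']

lemma bisect_d {A B : Set S} (hA : IsPFilt A) (hB : IsPFilt B) {a : S}
    (haA : a ∈ A) (haB : a ∈ B) (hd : dF A = dF B) : A ⊆ B := by
  intro x hx
  have hmem : a⁻¹ * x ∈ dF B := by
    rw [← hd]
    exact ⟨_, ⟨a, haA, x, hx, rfl⟩, nle_refl hS _⟩
  obtain ⟨g, ⟨u, hu, v, hv, rfl⟩, hg⟩ := hmem
  obtain ⟨c, hc, hca, hcu, hcv⟩ := directed3 hS hB.1 haB hu hv
  have h1 : natLe c (c * (u⁻¹ * v)) := by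
    have := nle_mul hS (nle_refl hS c) (nle_mul hS (nle_inv hS hcu) hcv)
    rwa [mim' hS c] at this
  have h2 : natLe (c * (u⁻¹ * v)) (a * (a⁻¹ * x)) := nle_mul hS hca hg
  have h3 : natLe (a * (a⁻¹ * x)) x :=
    nle_of_left hS ⟨a * a⁻¹, idem_ai hS a, (hS.mul_assoc a a⁻¹ x).symm⟩
  exact hB.1.2.1 c hc x (nle_trans hS h1 (nle_trans hS h2 h3))

lemma bisect_r {A B : Set S} (hA : IsPFilt A) (hB : IsPFilt B) {a : S}
    (haA : a ∈ A) (haB : a ∈ B) (hd : rF A = rF B) : A ⊆ B := by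
  intro x hx
  have hmem : x * a⁻¹ ∈ rF B := by
    rw [← hd]
    exact ⟨_, ⟨x, hx, a, haA, rfl⟩, nle_refl hS _⟩
  obtain ⟨g, ⟨u, hu, v, hv, rfl⟩, hg⟩ := hmem
  obtain ⟨c, hc, hca, hcu, hcv⟩ := directed3 hS hB.1 haB hu hv
  have h1 : natLe c ((u * v⁻¹) * c) := by
    have := nle_mul hS (nle_mul hS hcu (nle_inv hS hcv)) (nle_refl hS c)
    rwa [hS.mul_inv_mul c] at this
  have h2 : natLe ((u * v⁻¹) * c) ((x * a⁻¹) * a) := nle_mul hS hg hca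
  have h3 : natLe ((x * a⁻¹) * a) x := ⟨a⁻¹ * a, idem_ia hS a, hS.mul_assoc x a⁻¹ a⟩
  exact hB.1.2.1 c hc x (nle_trans hS h1 (nle_trans hS h2 h3))

lemma part3_rev {P : Set S} (hP : IsPFilt P) {a b : S} (hab : a * b ∈ P) :
    ∃ A, (IsPFilt A ∧ a ∈ A) ∧ ∃ B, (IsPFilt B ∧ b ∈ B) ∧ dF A = rF B ∧ P = mulF A B := by
  set A : Set S := upc {x | ∃ p ∈ P, x = p * b⁻¹} with hAdef
  set B : Set S := upc {x | ∃ p ∈ P, x = a⁻¹ * p} with hBdef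
  -- helper: get r ≤ p, q, a*b in P
  have hget : ∀ p ∈ P, ∀ q ∈ P, ∃ r ∈ P, natLe r p ∧ natLe r q ∧ natLe r (a*b) := by
    intro p hp q hq
    exact directed3 hS hP.1 hp hq hab
  have hmemA : ∀ p ∈ P, p * b⁻¹ ∈ A := by
    intro p hp
    exact ⟨p * b⁻¹, ⟨p, hp, rfl⟩, nle_refl hS _⟩
  have hmemB : ∀ p ∈ P, a⁻¹ * p ∈ B := by
    intro p hp
    exact ⟨a⁻¹ * p, ⟨p, hp, rfl⟩, nle_refl hS _⟩
  have haA : a ∈ A :=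
    ⟨(a*b) * b⁻¹, ⟨a*b, hab, rfl⟩, ⟨b * b⁻¹, idem_ai hS b, hS.mul_assoc a b b⁻¹⟩⟩
  have hbB : b ∈ B := ⟨a⁻¹ * (a*b), ⟨a*b, hab, rfl⟩,
    nle_of_left hS ⟨a⁻¹ * a, idem_ia hS a, (hS.mul_assoc a⁻¹ a b).symm⟩⟩
  have hApf : IsPFilt A := by
    refine ⟨⟨⟨a, haA⟩, ?_, ?_⟩, ?_⟩
    · rintro s ⟨g, hg, hgs⟩ t hst
      exact ⟨g, hg, nle_trans hS hgs hst⟩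
    · rintro s ⟨g1, ⟨p, hp, rfl⟩, hg1⟩ t ⟨g2, ⟨q, hq, rfl⟩, hg2⟩
      obtain ⟨r, hr, h1, h2, h3⟩ := hget p hp q hq
      refine ⟨r * b⁻¹, hmemA r hr, ?_, ?_⟩
      · exact nle_trans hS (nle_mul hS h1 (nle_refl hS b⁻¹)) hg1
      · exact nle_trans hS (nle_mul hS h2 (nle_refl hS b⁻¹)) hg2
    · rintro ⟨g, ⟨p, hp, rfl⟩, hg0⟩
      have hpb : p * b⁻¹ = 0 := nle_zero hS hg0
      obtain ⟨r, hr, h1, h2, h3⟩ := hget p hp p hp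
      have hrb : r * b⁻¹ = 0 := by
        have := nle_mul hS h1 (nle_refl hS b⁻¹)
        rw [hpb] at this
        exact nle_zero hS this
      have : r = 0 := by
        rw [← le_ab_r2 hS h3, ← hS.mul_assoc, hrb, hS.zero_mul]
      exact hP.2 (this ▸ hr)
  have hBpf : IsPFilt B := by
    refine ⟨⟨⟨b, hbB⟩, ?_, ?_⟩, ?_⟩
    · rintro s ⟨g, hg, hgs⟩ t hst
      exact ⟨g, hg, nle_trans hS hgs hst⟩
    · rintro s ⟨g1, ⟨p, hp, rfl⟩, hg1⟩ t ⟨g2, ⟨q, hq, rfl⟩, hg2⟩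
      obtain ⟨r, hr, h1, h2, h3⟩ := hget p hp q hq
      refine ⟨a⁻¹ * r, hmemB r hr, ?_, ?_⟩
      · exact nle_trans hS (nle_mul hS (nle_refl hS a⁻¹) h1) hg1
      · exact nle_trans hS (nle_mul hS (nle_refl hS a⁻¹) h2) hg2
    · rintro ⟨g, ⟨p, hp, rfl⟩, hg0⟩
      have hpb : a⁻¹ * p = 0 := nle_zero hS hg0
      obtain ⟨r, hr, h1, h2, h3⟩ := hget p hp p hp
      have hrb : a⁻¹ * r = 0 := by
        have := nle_mul hS (nle_refl hS a⁻¹) h1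
        rw [hpb] at this
        exact nle_zero hS this
      have : r = 0 := by
        rw [← le_ab_r1 hS h3, hrb, hS.mul_zero]
      exact hP.2 (this ▸ hr)
  have hdr : dF A = rF B := by
    ext s
    constructor
    · rintro ⟨g, ⟨x, hx, y, hy, rfl⟩, hg⟩
      obtain ⟨g1, ⟨p, hp, rfl⟩, hg1⟩ := hx
      obtain ⟨g2, ⟨q, hq, rfl⟩, hg2⟩ := hy
      obtain ⟨r, hr, h1, h2, h3⟩ := hget p hp q hq
      have hle : natLe ((r*b⁻¹)⁻¹ * (r*b⁻¹)) (x⁻¹ * y) := by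
        refine nle_mul hS (nle_inv hS ?_) ?_
        · exact nle_trans hS (nle_mul hS h1 (nle_refl hS b⁻¹)) hg1
        · exact nle_trans hS (nle_mul hS h2 (nle_refl hS b⁻¹)) hg2
      refine ⟨(a⁻¹*r) * (a⁻¹*r)⁻¹, ⟨a⁻¹*r, hmemB r hr, a⁻¹*r, hmemB r hr, rfl⟩, ?_⟩
      rw [key_identity hS h3]
      exact nle_trans hS hle hg
    · rintro ⟨g, ⟨x, hx, y, hy, rfl⟩, hg⟩
      obtain ⟨g1, ⟨p, hp, rfl⟩, hg1⟩ := hx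
      obtain ⟨g2, ⟨q, hq, rfl⟩, hg2⟩ := hy
      obtain ⟨r, hr, h1, h2, h3⟩ := hget p hp q hq
      have hle : natLe ((a⁻¹*r) * (a⁻¹*r)⁻¹) (x * y⁻¹) := by
        refine nle_mul hS ?_ (nle_inv hS ?_)
        · exact nle_trans hS (nle_mul hS (nle_refl hS a⁻¹) h1) hg1
        · exact nle_trans hS (nle_mul hS (nle_refl hS a⁻¹) h2) hg2
      refine ⟨(r*b⁻¹)⁻¹ * (r*b⁻¹), ⟨r*b⁻¹, hmemA r hr, r*b⁻¹, hmemA r hr, rfl⟩, ?_⟩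
      rw [← key_identity hS h3]
      exact nle_trans hS hle hg
  have hPeq : P = mulF A B := by
    ext s
    constructor
    · intro hs
      obtain ⟨r, hr, h1, h2, h3⟩ := hget s hs s hs
      refine ⟨(r*b⁻¹) * (a⁻¹*r), ⟨r*b⁻¹, hmemA r hr, a⁻¹*r, hmemB r hr, rfl⟩, ?_⟩
      rw [le_ab_split hS h3]
      exact h1
    · rintro ⟨g, ⟨x, hx, y, hy, rfl⟩, hg⟩
      obtain ⟨g1, ⟨p, hp, rfl⟩, hg1⟩ := hx
      obtain ⟨g2, ⟨q, hq, rfl⟩, hg2⟩ := hy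
      obtain ⟨r, hr, h1, h2, h3⟩ := hget p hp q hq
      have hle : natLe ((r*b⁻¹) * (a⁻¹*r)) (x * y) := by
        refine nle_mul hS ?_ ?_
        · exact nle_trans hS (nle_mul hS h1 (nle_refl hS b⁻¹)) hg1
        · exact nle_trans hS (nle_mul hS (nle_refl hS a⁻¹) h2) hg2
      rw [le_ab_split hS h3] at hle
      exact hP.1.2.1 r hr s (nle_trans hS hle hg)
  exact ⟨A, ⟨hApf, haA⟩, B, ⟨hBpf, hbB⟩, hdr, hPeq⟩

end Main1

/-- Properties of the sets `U_a` in the groupoid of proper filters: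
`U_0 = ∅`, `U_a⁻¹ = U_{a⁻¹}`, `U_a U_b = U_{ab}`, each `U_a` is a partial
bisection, and `U_a ∩ U_b = ⋃_{x ≤ a,b} U_x`. -/
theorem U_sets_properties {S : Type*} [Mul S] [Inv S] [Zero S]
    (hS : InvSemigroupZero S) (a b : S) :
    UU (0 : S) = ∅ ∧
    invF '' UU a = UU a⁻¹ ∧
    prodUU (UU a) (UU b) = UU (a * b) ∧
    (∀ A ∈ UU a, ∀ B ∈ UU a, (dF A = dF B → A = B) ∧ (rF A = rF B → A = B)) ∧
    UU a ∩ UU b = {A | ∃ x : S, natLe x a ∧ natLe x b ∧ A ∈ UU x} := by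
  refine ⟨?_, ?_, ?_, ?_, ?_⟩
  · ext A
    simp only [UU, Set.mem_setOf_eq, Set.mem_empty_iff_false, iff_false, not_and]
    intro hA h0
    exact hA.2 h0
  · ext B
    constructor
    · rintro ⟨A, ⟨hA, haA⟩, rfl⟩
      exact ⟨invF_pfilt hS hA, ⟨a, haA, rfl⟩⟩
    · rintro ⟨hB, haB⟩
      refine ⟨invF B, ⟨invF_pfilt hS hB, ⟨a⁻¹, haB, inv_invol hS a⟩⟩, invF_invF hS B⟩
  · ext P
    constructor
    · rintro ⟨A, ⟨hA, haA⟩, B, ⟨hB, hbB⟩, hd, rfl⟩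
      exact ⟨mulF_pfilt hS hA hB hd, mulF_mem hS haA hbB⟩
    · rintro ⟨hP, hab⟩
      obtain ⟨A, hA, B, hB, hd, hPeq⟩ := part3_rev hS hP hab
      exact ⟨A, hA, B, hB, hd, hPeq⟩
  · rintro A ⟨hA, haA⟩ B ⟨hB, haB⟩
    constructor
    · intro hd
      exact Set.Subset.antisymm (bisect_d hS hA hB haA haB hd)
        (bisect_d hS hB hA haB haA hd.symm)
    · intro hr
      exact Set.Subset.antisymm (bisect_r hS hA hB haA haB hr)
        (bisect_r hS hB hA haB haA hr.symm)
  · ext A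
    constructor
    · rintro ⟨⟨hA, haA⟩, ⟨_, hbA⟩⟩
      obtain ⟨c, hc, hca, hcb⟩ := hA.1.2.2 a haA b hbA
      exact ⟨c, hca, hcb, hA, hc⟩
    · rintro ⟨x, hxa, hxb, hA, hxA⟩
      exact ⟨⟨hA, hA.1.2.1 x hxA a hxa⟩, ⟨hA, hA.1.2.1 x hxA b hxb⟩⟩
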